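/- If C is a common sublist of A and B that contains P as a contiguous infix (i.e., C = α ++ P ++ γ), then there is a common sublist C' of A and B of the same length, also of the form α ++ P ++ γ, whose embedding into A uses a compact appearance of P in A (the occurrence of P in A has minimal last index among occurrences starting at the same first index). -/

import Mathlib

/-- Maximum length of a common sublist (LCS length) of `X` and `Y`. -/
def LLCS {σ : Type} [DecidableEq σ] (X Y : List σ) : ℕ :=
  ((X.sublists.filter (fun C => decide (C.Sublist Y))).map List.length).foldr max 0

/-- `I` is an appearance (embedding witness) of `P` in `A`: a strictly increasing
list of (0-based) indices realizing `P` as a sublist of `A`. -/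
def IsApp {σ : Type} (A P : List σ) (I : List ℕ) : Prop :=
  I.Chain' (· < ·) ∧ I.length = P.length ∧ ∀ t, t < I.length → A[I.getD t 0]? = P[t]?

/-- A greedy (compact) appearance: each next index is the least possible one. -/
def IsGreedy {σ : Type} (A P : List σ) (I : List ℕ) : Prop :=
  IsApp A P I ∧ ∀ t, t + 1 < I.length → ∀ k, I.getD t 0 < k → A[k]? = P[t+1]? →
    I.getD (t+1) 0 ≤ k

namespace Stmt4Aux

lemma chain'_getD {I : List ℕ} (h : I.Chain' (· < ·)) {t : ℕ} (ht : t + 1 < I.length) :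
    I.getD t 0 < I.getD (t+1) 0 := by
  rw [List.getD_eq_getElem I 0 (by omega), List.getD_eq_getElem I 0 ht]
  have := List.isChain_iff_getElem.mp h t (by omega)
  simpa using this

lemma head?_eq_getD {I : List ℕ} (h : I ≠ []) : I.head? = some (I.getD 0 0) := by
  cases I with
  | nil => exact absurd rfl h
  | cons a l => rfl

lemma getLastD_eq_getD (l : List ℕ) : l.getLastD 0 = l.getD (l.length - 1) 0 := by
  rw [List.getLastD_eq_getLast?, List.getLast?_eq_getElem?, List.getD_eq_getElem?_getD]

variable {σ : Type}

lemma exists_app {A C : List σ} (h : C.Sublist A) : ∃ J, IsApp A C J := by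
  induction h with
  | slnil => exact ⟨[], List.isChain_nil, rfl, by simp⟩
  | @cons l r a h ih =>
    obtain ⟨J, hc, hl, hg⟩ := ih
    refine ⟨J.map (· + 1), ?_, by simpa using hl, ?_⟩
    · show List.IsChain _ _; rw [List.isChain_map]; exact hc.imp (fun _ _ h => by omega)
    · intro t ht
      simp only [List.length_map] at ht
      rw [List.getD_eq_getElem _ 0 (by simpa using ht), List.getElem_map]
      have := hg t ht
      rw [List.getD_eq_getElem _ 0 ht] at this
      simpa using this
  | @cons_cons l r a h ih =>
    obtain ⟨J, hc, hl, hg⟩ := ih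
    refine ⟨0 :: J.map (· + 1), ?_, by simpa using hl, ?_⟩
    · show List.IsChain _ _; rw [List.isChain_cons]
      constructor
      · intro b hb
        rcases J with _ | ⟨j, J⟩
        · simp at hb
        · simp at hb; omega
      · show List.IsChain _ _; rw [List.isChain_map]; exact hc.imp (fun _ _ h => by omega)
    · intro t ht
      cases t with
      | zero => rfl
      | succ t =>
        simp only [List.length_cons, List.length_map] at ht
        have ht' : t < J.length := by omega
        rw [List.getD_cons_succ, List.getD_eq_getElem _ 0 (by simpa using ht'),
          List.getElem_map]
        have := hg t ht'
        rw [List.getD_eq_getElem _ 0 ht'] at this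
        simpa using this

lemma exists_greedy (A : List σ) : ∀ (C : List σ) (s : ℕ) (J : List ℕ),
    IsApp A C J → (∀ t, t < J.length → s ≤ J.getD t 0) →
    ∃ I, IsGreedy A C I ∧ (∀ t, t < I.length → s ≤ I.getD t 0) ∧
      (∀ k, s ≤ k → A[k]? = C[0]? → ∀ j ∈ I.head?, j ≤ k) := by
  intro C
  induction C with
  | nil =>
    intro s J _ _
    exact ⟨[], ⟨⟨List.isChain_nil, rfl, by simp⟩, by simp⟩, by simp, by simp⟩
  | cons c C ih =>
    intro s J hJ hs
    classical
    obtain ⟨hc, hl, hg⟩ := hJ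
    obtain ⟨j0, J', rfl⟩ : ∃ j0 J', J = j0 :: J' := by
      cases J with
      | nil => simp at hl
      | cons a l => exact ⟨a, l, rfl⟩
    have hj0 : A[j0]? = some c := by
      have := hg 0 (by simp); simpa using this
    have hj0s : s ≤ j0 := by have := hs 0 (by simp); simpa using this
    have hex : ∃ k, s ≤ k ∧ A[k]? = some c := ⟨j0, hj0s, hj0⟩
    obtain ⟨i0, hi0s, hi0, hi0min⟩ :
        ∃ i0, s ≤ i0 ∧ A[i0]? = some c ∧ ∀ k, s ≤ k → A[k]? = some c → i0 ≤ k :=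
      ⟨Nat.find hex, (Nat.find_spec hex).1, (Nat.find_spec hex).2,
        fun k h1 h2 => Nat.find_min' hex ⟨h1, h2⟩⟩
    have hi0j0 : i0 ≤ j0 := hi0min j0 hj0s hj0
    -- pairwise from chain'
    have hpw : ∀ x ∈ J', j0 < x := by
      have := (List.isChain_iff_pairwise.mp hc)
      exact fun x hx => (List.pairwise_cons.mp this).1 x hx
    have hJ' : IsApp A C J' := by
      refine ⟨hc.tail, by simpa using hl, fun t ht => ?_⟩
      have := hg (t+1) (by simpa using Nat.succ_lt_succ ht)
      simpa using this
    have hJ's : ∀ t, t < J'.length → i0 + 1 ≤ J'.getD t 0 := by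
      intro t ht
      have hmem : J'.getD t 0 ∈ J' := by
        rw [List.getD_eq_getElem _ 0 ht]; exact List.getElem_mem _
      have := hpw _ hmem
      omega
    obtain ⟨I', ⟨⟨hc', hl', hg'⟩, hstep'⟩, hge', hmin'⟩ := ih (i0+1) J' hJ' hJ's
    refine ⟨i0 :: I', ⟨⟨?_, by simpa using hl', ?_⟩, ?_⟩, ?_, ?_⟩
    · show List.IsChain _ _; rw [List.isChain_cons]
      refine ⟨fun b hb => ?_, hc'⟩
      have hne : I' ≠ [] := by intro h; rw [h] at hb; simp at hb
      rw [head?_eq_getD hne] at hb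
      have := hge' 0 (by cases I' with | nil => exact absurd rfl hne | cons => simp)
      have hb' := Option.mem_some_iff.mp hb
      omega
    · intro t ht
      cases t with
      | zero => simpa using hi0
      | succ t =>
        rw [List.getD_cons_succ]
        have := hg' t (by simpa using ht)
        simpa using this
    · intro t ht k hk hA
      cases t with
      | zero =>
        have hne : I' ≠ [] := by
          intro h; rw [h] at ht; simp at ht
        rw [List.getD_cons_succ]
        have h0 : I'.getD 0 0 ∈ I'.head? := by rw [head?_eq_getD hne]; rfl
        refine hmin' k ?_ (by simpa using hA) _ h0
        simp only [List.getD_cons_zero] at hk; omega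
      | succ t =>
        rw [List.getD_cons_succ] at hk ⊢
        exact hstep' t (by simpa using ht) k hk (by simpa using hA)
    · intro t ht
      cases t with
      | zero => simpa using hi0s
      | succ t =>
        rw [List.getD_cons_succ]
        have := hge' t (by simpa using ht)
        omega
    · intro k hk hA j hj
      simp only [List.head?_cons, Option.mem_some_iff] at hj
      subst hj
      exact hi0min k hk (by simpa using hA)

lemma greedy_last_min {A P : List σ} {I K : List ℕ} (hI : IsGreedy A P I) (hK : IsApp A P K)
    (hh : K.head? = I.head?) : I.getLastD 0 ≤ K.getLastD 0 := by
  obtain ⟨⟨hcI, hlI, hgI⟩, hstep⟩ := hI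
  obtain ⟨hcK, hlK, hgK⟩ := hK
  have hlen : K.length = I.length := by rw [hlI, hlK]
  have pointwise : ∀ t, t < I.length → I.getD t 0 ≤ K.getD t 0 := by
    intro t
    induction t with
    | zero =>
      intro h
      have hneI : I ≠ [] := by intro e; rw [e] at h; simp at h
      have hneK : K ≠ [] := by intro e; rw [e, List.length_nil] at hlen; omega
      rw [head?_eq_getD hneK, head?_eq_getD hneI] at hh
      have := Option.some.inj hh
      omega
    | succ t iht =>
      intro h
      have h1 := iht (by omega)
      have hkc : K.getD t 0 < K.getD (t+1) 0 := chain'_getD hcK (by omega)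
      refine hstep t h (K.getD (t+1) 0) (by omega) ?_
      exact hgK (t+1) (by omega)
  rcases Nat.eq_zero_or_pos I.length with h0 | hpos
  · have : I = [] := List.length_eq_zero_iff.mp h0
    simp [this, getLastD_eq_getD]
  · rw [getLastD_eq_getD, getLastD_eq_getD, hlen]
    exact pointwise (I.length - 1) (by omega)

end Stmt4Aux

theorem stmt4 {σ : Type} (A B P C al ga : List σ)
    (hC : C = al ++ P ++ ga) (hA : C.Sublist A) (hB : C.Sublist B) :
    ∃ (C' al' ga' : List σ) (I : List ℕ),
      C' = al' ++ P ++ ga' ∧ C'.length = C.length ∧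
      C'.Sublist A ∧ C'.Sublist B ∧ IsApp A C' I ∧
      IsApp A P ((I.drop al'.length).take P.length) ∧
      (∀ K : List ℕ, IsApp A P K →
        K.head? = ((I.drop al'.length).take P.length).head? →
        ((I.drop al'.length).take P.length).getLastD 0 ≤ K.getLastD 0) := by
  obtain ⟨J, hJ⟩ := Stmt4Aux.exists_app hA
  obtain ⟨I, ⟨hIapp, hIstep⟩, -, -⟩ :=
    Stmt4Aux.exists_greedy A C 0 J hJ (fun t _ => Nat.zero_le _)
  obtain ⟨hIc, hIl, hIg⟩ := hIapp
  have hClen : C.length = al.length + P.length + ga.length := by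
    subst hC; simp [List.length_append]; omega
  have hIlen : I.length = al.length + P.length + ga.length := by rw [hIl, hClen]
  have hMget : ∀ t, t < P.length →
      ((I.drop al.length).take P.length).getD t 0 = I.getD (al.length + t) 0 := by
    intro t ht
    rw [List.getD_eq_getElem?_getD, List.getD_eq_getElem?_getD, List.getElem?_take,
      if_pos ht, List.getElem?_drop]
  have hMlen : ((I.drop al.length).take P.length).length = P.length := by
    rw [List.length_take, List.length_drop, hIlen]; omega
  have hCget : ∀ t, t < P.length → C[al.length + t]? = P[t]? := by
    intro t ht
    subst hC
    rw [List.append_assoc,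
      List.getElem?_append_right (by omega : al.length ≤ al.length + t)]
    have h2 : al.length + t - al.length = t := by omega
    rw [h2, List.getElem?_append, if_pos ht]
  have hMapp : IsApp A P ((I.drop al.length).take P.length) := by
    refine ⟨(hIc.drop al.length).take P.length, hMlen, fun t ht => ?_⟩
    rw [hMlen] at ht
    rw [hMget t ht, hIg (al.length + t) (by omega), hCget t ht]
  have hMstep : IsGreedy A P ((I.drop al.length).take P.length) := by
    refine ⟨hMapp, fun t ht k hk hAk => ?_⟩
    rw [hMlen] at ht
    rw [hMget (t+1) ht]
    rw [hMget t (by omega)] at hk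
    have h3 : A[k]? = C[al.length + t + 1]? := by
      rw [hAk]
      have := hCget (t+1) ht
      rw [← this, Nat.add_assoc]
    have := hIstep (al.length + t) (by omega) k hk h3
    have h4 : al.length + (t + 1) = al.length + t + 1 := by omega
    rw [h4]
    exact this
  exact ⟨C, al, ga, I, hC, rfl, hA, hB, ⟨hIc, hIl, hIg⟩, hMapp,
    fun K hK hh => Stmt4Aux.greedy_last_min hMstep hK hh⟩
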